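/- For n >= 3, the permutations of {1,...,n} that avoid a nonconsecutive 321 pattern and whose first three entries are decreasing are in bijection with the permutations of {1,...,n-2} that avoid a nonconsecutive 321 pattern and do not begin with three decreasing entries; the bijection deletes the second and third entries (necessarily 2 and 1) and subtracts 2 from the remaining entries. -/

import Mathlib

/-- A permutation avoids a nonconsecutive 321 pattern if every occurrence of 321
(indices `i < j < k` with `π i > π j > π k`) occupies three consecutive positions. -/
def AvoidsNonconsec321 {n : ℕ} (π : Equiv.Perm (Fin n)) : Prop :=
  ∀ i j k : Fin n, i < j → j < k → π k < π j → π j < π i →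
    (j : ℕ) = (i : ℕ) + 1 ∧ (k : ℕ) = (i : ℕ) + 2

/-- The permutation starts with three decreasing entries. -/
def Dec3 {n : ℕ} (π : Equiv.Perm (Fin n)) : Prop :=
  ∃ h : 2 < n, π ⟨2, h⟩ < π ⟨1, by omega⟩ ∧ π ⟨1, by omega⟩ < π ⟨0, by omega⟩

namespace BD
variable {n : ℕ}

/-- In a permutation avoiding nonconsecutive 321 patterns that starts with three
decreasing entries, the second entry is 1 and the third is 0. -/
lemma struct (hn : 3 ≤ n) (π : Equiv.Perm (Fin n)) (hA : AvoidsNonconsec321 π)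
    (hD : Dec3 π) :
    (π ⟨1, by omega⟩ : ℕ) = 1 ∧ (π ⟨2, by omega⟩ : ℕ) = 0 := by
  obtain ⟨h2, hd1, hd2⟩ := hD
  have hd1' : (π ⟨2, h2⟩ : ℕ) < (π ⟨1, by omega⟩ : ℕ) := hd1
  have hd2' : (π ⟨1, by omega⟩ : ℕ) < (π ⟨0, by omega⟩ : ℕ) := hd2
  have hπ2 : (π ⟨2, h2⟩ : ℕ) = 0 := by
    by_contra hne
    obtain ⟨k, hπk⟩ : ∃ k, π k = ⟨0, by omega⟩ := ⟨π.symm _, π.apply_symm_apply _⟩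
    have hπkv : (π k : ℕ) = 0 := by rw [hπk]
    have hk2 : (k : ℕ) ≠ 2 := by
      intro h
      have : k = ⟨2, h2⟩ := Fin.ext h
      rw [this] at hπkv
      exact hne hπkv
    have hk0 : (k : ℕ) ≠ 0 := by
      intro h
      have : k = ⟨0, by omega⟩ := Fin.ext h
      rw [this] at hπkv
      omega
    have hk1 : (k : ℕ) ≠ 1 := by
      intro h
      have : k = ⟨1, by omega⟩ := Fin.ext h
      rw [this] at hπkv
      omega
    have hkn := k.isLt
    have := hA ⟨0, by omega⟩ ⟨1, by omega⟩ k
      (by rw [Fin.lt_def]; simp only [Fin.val_mk]; omega)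
      (by rw [Fin.lt_def]; simp only [Fin.val_mk]; omega)
      (by rw [Fin.lt_def]; omega) hd2
    simp only [Fin.val_mk] at this
    omega
  refine ⟨?_, hπ2⟩
  by_contra hne
  obtain ⟨k, hπk⟩ : ∃ k, π k = ⟨1, by omega⟩ := ⟨π.symm _, π.apply_symm_apply _⟩
  have hπkv : (π k : ℕ) = 1 := by rw [hπk]
  have hk1 : (k : ℕ) ≠ 1 := by
    intro h
    have : k = ⟨1, by omega⟩ := Fin.ext h
    rw [this] at hπkv
    exact hne hπkv
  have hk2 : (k : ℕ) ≠ 2 := by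
    intro h
    have : k = ⟨2, h2⟩ := Fin.ext h
    rw [this] at hπkv
    omega
  have hk0 : (k : ℕ) ≠ 0 := by
    intro h
    have : k = ⟨0, by omega⟩ := Fin.ext h
    rw [this] at hπkv
    omega
  have hkn := k.isLt
  have := hA ⟨0, by omega⟩ ⟨1, by omega⟩ k
    (by rw [Fin.lt_def]; simp only [Fin.val_mk]; omega)
    (by rw [Fin.lt_def]; simp only [Fin.val_mk]; omega)
    (by rw [Fin.lt_def]; omega) hd2
  simp only [Fin.val_mk] at this
  omega

lemma lt0 (hn : 3 ≤ n) : 0 < n := by omega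

lemma lt0' (hn : 3 ≤ n) : 0 < n - 2 := by omega

lemma lt2 (hn : 3 ≤ n) (i : Fin (n - 2)) : (i : ℕ) + 2 < n := by have := i.isLt; omega

/-- position embedding `Fin (n-2) → Fin n`: `0 ↦ 0`, `i ↦ i+2` for `i ≥ 1`. -/
def posUp (hn : 3 ≤ n) (i : Fin (n - 2)) : Fin n :=
  if (i : ℕ) = 0 then ⟨0, lt0 hn⟩ else ⟨(i : ℕ) + 2, lt2 hn i⟩

lemma posUp_val (hn : 3 ≤ n) (i : Fin (n - 2)) :
    ((posUp hn i : Fin n) : ℕ) = if (i : ℕ) = 0 then 0 else (i : ℕ) + 2 := by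
  unfold posUp; split <;> rfl

lemma posUp_ne (hn : 3 ≤ n) (i : Fin (n - 2)) :
    ((posUp hn i : Fin n) : ℕ) ≠ 1 ∧ ((posUp hn i : Fin n) : ℕ) ≠ 2 := by
  rw [posUp_val]; split <;> omega

lemma posUp_mono (hn : 3 ≤ n) {i j : Fin (n - 2)} (h : i < j) :
    posUp hn i < posUp hn j := by
  rw [Fin.lt_def, posUp_val, posUp_val]
  rw [Fin.lt_def] at h
  split <;> split <;> omega

/-- values away from positions 1 and 2 are at least 2 -/
lemma ge2 (hn : 3 ≤ n) (π : Equiv.Perm (Fin n))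
    (h1 : (π ⟨1, by omega⟩ : ℕ) = 1) (h2 : (π ⟨2, by omega⟩ : ℕ) = 0)
    (i : Fin n) (hi1 : (i : ℕ) ≠ 1) (hi2 : (i : ℕ) ≠ 2) :
    2 ≤ (π i : ℕ) := by
  have a1 : (π i : ℕ) ≠ 1 := by
    intro h
    have : π i = π ⟨1, by omega⟩ := Fin.ext (by rw [h, h1])
    exact hi1 (congrArg Fin.val (π.injective this))
  have a2 : (π i : ℕ) ≠ 0 := by
    intro h
    have : π i = π ⟨2, by omega⟩ := Fin.ext (by rw [h, h2])
    exact hi2 (congrArg Fin.val (π.injective this))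
  omega

def fwd (hn : 3 ≤ n) (π : Equiv.Perm (Fin n)) (i : Fin (n - 2)) : Fin (n - 2) :=
  ⟨(π (posUp hn i) : ℕ) - 2, by have := (π (posUp hn i)).isLt; omega⟩

lemma fwd_inj (hn : 3 ≤ n) (π : Equiv.Perm (Fin n))
    (h1 : (π ⟨1, by omega⟩ : ℕ) = 1) (h2 : (π ⟨2, by omega⟩ : ℕ) = 0) :
    Function.Injective (fwd hn π) := by
  intro a b h
  have hv : (π (posUp hn a) : ℕ) - 2 = (π (posUp hn b) : ℕ) - 2 := congrArg Fin.val h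
  have ga := ge2 hn π h1 h2 _ (posUp_ne hn a).1 (posUp_ne hn a).2
  have gb := ge2 hn π h1 h2 _ (posUp_ne hn b).1 (posUp_ne hn b).2
  have : π (posUp hn a) = π (posUp hn b) := Fin.ext (by omega)
  have hpv := congrArg Fin.val (π.injective this)
  rw [posUp_val, posUp_val] at hpv
  apply Fin.ext
  split at hpv <;> split at hpv <;> omega

noncomputable def fwdPerm (hn : 3 ≤ n) (π : Equiv.Perm (Fin n))
    (h1 : (π ⟨1, by omega⟩ : ℕ) = 1) (h2 : (π ⟨2, by omega⟩ : ℕ) = 0) :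
    Equiv.Perm (Fin (n - 2)) :=
  Equiv.ofBijective (fwd hn π) (Finite.injective_iff_bijective.mp (fwd_inj hn π h1 h2))

lemma fwdPerm_val (hn : 3 ≤ n) (π : Equiv.Perm (Fin n)) (h1 h2) (i : Fin (n - 2)) :
    (fwdPerm hn π h1 h2 i : ℕ) = (π (posUp hn i) : ℕ) - 2 := rfl

/-- key claim: any 321 occurrence in `fwdPerm` is consecutive and does not start at 0 -/
lemma fwd_key (hn : 3 ≤ n) (π : Equiv.Perm (Fin n)) (hA : AvoidsNonconsec321 π)
    (h1 : (π ⟨1, by omega⟩ : ℕ) = 1) (h2 : (π ⟨2, by omega⟩ : ℕ) = 0)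
    (i j k : Fin (n - 2)) (hij : i < j) (hjk : j < k)
    (hkj : fwdPerm hn π h1 h2 k < fwdPerm hn π h1 h2 j)
    (hji : fwdPerm hn π h1 h2 j < fwdPerm hn π h1 h2 i) :
    (j : ℕ) = (i : ℕ) + 1 ∧ (k : ℕ) = (i : ℕ) + 2 ∧ 1 ≤ (i : ℕ) := by
  rw [Fin.lt_def] at hkj hji
  have gi := ge2 hn π h1 h2 _ (posUp_ne hn i).1 (posUp_ne hn i).2
  have gj := ge2 hn π h1 h2 _ (posUp_ne hn j).1 (posUp_ne hn j).2
  have gk := ge2 hn π h1 h2 _ (posUp_ne hn k).1 (posUp_ne hn k).2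
  have hkj' : π (posUp hn k) < π (posUp hn j) := by
    rw [Fin.lt_def]
    have e1 := fwdPerm_val hn π h1 h2 k
    have e2 := fwdPerm_val hn π h1 h2 j
    omega
  have hji' : π (posUp hn j) < π (posUp hn i) := by
    rw [Fin.lt_def]
    have e1 := fwdPerm_val hn π h1 h2 j
    have e2 := fwdPerm_val hn π h1 h2 i
    omega
  have := hA _ _ _ (posUp_mono hn hij) (posUp_mono hn hjk) hkj' hji'
  rw [posUp_val, posUp_val, posUp_val] at this
  rw [Fin.lt_def] at hij hjk
  split at this <;> split at this <;> split at this <;> omega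

lemma fwd_avoids (hn : 3 ≤ n) (π : Equiv.Perm (Fin n)) (hA : AvoidsNonconsec321 π)
    (h1 : (π ⟨1, by omega⟩ : ℕ) = 1) (h2 : (π ⟨2, by omega⟩ : ℕ) = 0) :
    AvoidsNonconsec321 (fwdPerm hn π h1 h2) ∧ ¬ Dec3 (fwdPerm hn π h1 h2) := by
  constructor
  · intro i j k hij hjk hkj hji
    have := fwd_key hn π hA h1 h2 i j k hij hjk hkj hji
    exact ⟨this.1, this.2.1⟩
  · rintro ⟨hm, hd1, hd2⟩
    have := fwd_key hn π hA h1 h2 ⟨0, by omega⟩ ⟨1, by omega⟩ ⟨2, hm⟩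
      (Fin.lt_def.mpr (by simp)) (Fin.lt_def.mpr (by simp)) hd1 hd2
    simp only [Fin.val_mk] at this
    omega

/-- value embedding `Fin (n-2) → Fin n`, adding 2 -/
def up2 (hn : 3 ≤ n) (x : Fin (n - 2)) : Fin n :=
  ⟨(x : ℕ) + 2, lt2 hn x⟩

def bwd (hn : 3 ≤ n) (σ : Equiv.Perm (Fin (n - 2))) (i : Fin n) : Fin n :=
  if (i : ℕ) = 1 then ⟨1, by omega⟩
  else if (i : ℕ) = 2 then ⟨0, lt0 hn⟩
  else if (i : ℕ) = 0 then up2 hn (σ ⟨0, lt0' hn⟩)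
  else up2 hn (σ ⟨(i : ℕ) - 2, by have := i.isLt; omega⟩)

lemma bwd_val (hn : 3 ≤ n) (σ : Equiv.Perm (Fin (n - 2))) (i : Fin n) :
    ((bwd hn σ i : Fin n) : ℕ) =
      if (i : ℕ) = 1 then 1
      else if (i : ℕ) = 2 then 0
      else if (i : ℕ) = 0 then (σ ⟨0, lt0' hn⟩ : ℕ) + 2
      else (σ ⟨(i : ℕ) - 2, by have := i.isLt; omega⟩ : ℕ) + 2 := by
  unfold bwd up2
  split <;> [rfl; (split <;> [rfl; (split <;> rfl)])]

lemma bwd_val1 (hn : 3 ≤ n) (σ : Equiv.Perm (Fin (n - 2))) (i : Fin n)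
    (h : (i : ℕ) = 1) : ((bwd hn σ i : Fin n) : ℕ) = 1 := by
  rw [bwd_val, if_pos h]

lemma bwd_val2 (hn : 3 ≤ n) (σ : Equiv.Perm (Fin (n - 2))) (i : Fin n)
    (h : (i : ℕ) = 2) : ((bwd hn σ i : Fin n) : ℕ) = 0 := by
  rw [bwd_val, if_neg (by omega), if_pos h]

lemma bwd_val0 (hn : 3 ≤ n) (σ : Equiv.Perm (Fin (n - 2))) (i : Fin n)
    (t : Fin (n - 2)) (h : (i : ℕ) = 0) (ht : (t : ℕ) = 0) :
    ((bwd hn σ i : Fin n) : ℕ) = (σ t : ℕ) + 2 := by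
  rw [bwd_val, if_neg (by omega), if_neg (by omega), if_pos h]
  have : (⟨0, by omega⟩ : Fin (n - 2)) = t := Fin.ext (by simp only [Fin.val_mk]; omega)
  rw [this]

lemma bwd_val3 (hn : 3 ≤ n) (σ : Equiv.Perm (Fin (n - 2))) (i : Fin n)
    (t : Fin (n - 2)) (h : (i : ℕ) = (t : ℕ) + 2) (ht : 1 ≤ (t : ℕ)) :
    ((bwd hn σ i : Fin n) : ℕ) = (σ t : ℕ) + 2 := by
  rw [bwd_val, if_neg (by omega), if_neg (by omega), if_neg (by omega)]
  have : (⟨(i : ℕ) - 2, by have := i.isLt; omega⟩ : Fin (n - 2)) = t :=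
    Fin.ext (by simp only [Fin.val_mk]; omega)
  rw [this]

lemma bwd_inj (hn : 3 ≤ n) (σ : Equiv.Perm (Fin (n - 2))) :
    Function.Injective (bwd hn σ) := by
  have key : ∀ p q : Fin (n - 2), (σ p : ℕ) + 2 = (σ q : ℕ) + 2 → (p : ℕ) = (q : ℕ) := by
    intro p q hpq
    exact congrArg Fin.val (σ.injective (Fin.ext (by omega)))
  intro a b h
  have hv := congrArg Fin.val h
  rw [bwd_val, bwd_val] at hv
  apply Fin.ext
  split_ifs at hv <;> first
    | omega
    | (have := key _ _ hv; simp only [Fin.val_mk] at this; omega)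

noncomputable def bwdPerm (hn : 3 ≤ n) (σ : Equiv.Perm (Fin (n - 2))) :
    Equiv.Perm (Fin n) :=
  Equiv.ofBijective (bwd hn σ) (Finite.injective_iff_bijective.mp (bwd_inj hn σ))

lemma bwdPerm_apply (hn : 3 ≤ n) (σ : Equiv.Perm (Fin (n - 2))) (i : Fin n) :
    bwdPerm hn σ i = bwd hn σ i := rfl

lemma bwd_h1 (hn : 3 ≤ n) (σ : Equiv.Perm (Fin (n - 2))) :
    ((bwdPerm hn σ) ⟨1, by omega⟩ : ℕ) = 1 := by
  rw [bwdPerm_apply]; exact bwd_val1 hn σ _ rfl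

lemma bwd_h2 (hn : 3 ≤ n) (σ : Equiv.Perm (Fin (n - 2))) :
    ((bwdPerm hn σ) ⟨2, by omega⟩ : ℕ) = 0 := by
  rw [bwdPerm_apply]; exact bwd_val2 hn σ _ rfl

lemma bwd_dec3 (hn : 3 ≤ n) (σ : Equiv.Perm (Fin (n - 2))) :
    Dec3 (bwdPerm hn σ) := by
  refine ⟨by omega, ?_, ?_⟩ <;> rw [Fin.lt_def]
  · rw [bwd_h2 hn σ]
    have : ((bwdPerm hn σ) ⟨1, by omega⟩ : ℕ) = 1 := bwd_h1 hn σ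
    omega
  · have h1 : ((bwdPerm hn σ) ⟨1, by omega⟩ : ℕ) = 1 := bwd_h1 hn σ
    have h0 : ((bwdPerm hn σ) ⟨0, by omega⟩ : ℕ) = (σ ⟨0, by omega⟩ : ℕ) + 2 := by
      rw [bwdPerm_apply]; exact bwd_val0 hn σ _ _ rfl rfl
    omega

lemma bwd_avoids (hn : 3 ≤ n) (σ : Equiv.Perm (Fin (n - 2)))
    (hA : AvoidsNonconsec321 σ) (hnD : ¬ Dec3 σ) :
    AvoidsNonconsec321 (bwdPerm hn σ) := by
  intro i j k hij hjk hkj hji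
  rw [Fin.lt_def] at hij hjk
  rw [Fin.lt_def, bwdPerm_apply, bwdPerm_apply] at hkj hji
  have hin := i.isLt; have hjn := j.isLt; have hkn := k.isLt
  rcases (show (i : ℕ) = 0 ∨ (i : ℕ) = 1 ∨ (i : ℕ) = 2 ∨ 3 ≤ (i : ℕ) by omega)
    with hi | hi | hi | hi
  · -- i = 0
    obtain ⟨t0, ht0⟩ : ∃ t : Fin (n - 2), (t : ℕ) = 0 := ⟨⟨0, by omega⟩, rfl⟩
    have ei : ((bwd hn σ i : Fin n) : ℕ) = (σ t0 : ℕ) + 2 := bwd_val0 hn σ i t0 hi ht0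
    rcases (show (j : ℕ) = 1 ∨ (j : ℕ) = 2 ∨ 3 ≤ (j : ℕ) by omega) with hj | hj | hj
    · -- j = 1
      have ej := bwd_val1 hn σ j hj
      rcases (show (k : ℕ) = 2 ∨ 3 ≤ (k : ℕ) by omega) with hk | hk
      · exact ⟨by omega, by omega⟩
      · obtain ⟨tk, htk⟩ : ∃ t : Fin (n - 2), ((t : ℕ) = (k : ℕ) - 2 ∧ 1 ≤ (t : ℕ)) :=
          ⟨⟨(k : ℕ) - 2, by omega⟩, rfl, by simp only [Fin.val_mk]; omega⟩
        have ek := bwd_val3 hn σ k tk (by omega) htk.2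
        omega
    · -- j = 2
      have ej := bwd_val2 hn σ j hj
      omega
    · -- j ≥ 3, k ≥ 4 : pull back to σ and contradict ¬Dec3
      exfalso
      have hk4 : 4 ≤ (k : ℕ) := by omega
      obtain ⟨tj, htj, htj1⟩ : ∃ t : Fin (n - 2), ((t : ℕ) = (j : ℕ) - 2 ∧ 1 ≤ (t : ℕ)) :=
        ⟨⟨(j : ℕ) - 2, by omega⟩, rfl, by simp only [Fin.val_mk]; omega⟩
      obtain ⟨tk, htk, htk1⟩ : ∃ t : Fin (n - 2), ((t : ℕ) = (k : ℕ) - 2 ∧ 1 ≤ (t : ℕ)) :=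
        ⟨⟨(k : ℕ) - 2, by omega⟩, rfl, by simp only [Fin.val_mk]; omega⟩
      have ej := bwd_val3 hn σ j tj (by omega) htj1
      have ek := bwd_val3 hn σ k tk (by omega) htk1
      have key := hA t0 tj tk (Fin.lt_def.mpr (by omega)) (Fin.lt_def.mpr (by omega))
        (Fin.lt_def.mpr (by omega)) (Fin.lt_def.mpr (by omega))
      apply hnD
      have hm : 2 < n - 2 := by have := tk.isLt; omega
      refine ⟨hm, Fin.lt_def.mpr ?_, Fin.lt_def.mpr ?_⟩
      · have e1 : (⟨2, hm⟩ : Fin (n - 2)) = tk := Fin.ext (by simp only [Fin.val_mk]; omega)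
        have e2 : (⟨1, by omega⟩ : Fin (n - 2)) = tj := Fin.ext (by simp only [Fin.val_mk]; omega)
        rw [e1, e2]
        omega
      · have e2 : (⟨1, by omega⟩ : Fin (n - 2)) = tj := Fin.ext (by simp only [Fin.val_mk]; omega)
        have e0 : (⟨0, by omega⟩ : Fin (n - 2)) = t0 := Fin.ext (by simp only [Fin.val_mk]; omega)
        rw [e2, e0]
        omega
  · -- i = 1
    exfalso
    have ei := bwd_val1 hn σ i hi
    rcases (show (j : ℕ) = 2 ∨ 3 ≤ (j : ℕ) by omega) with hj | hj
    · have ej := bwd_val2 hn σ j hj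
      obtain ⟨tk, htk, htk1⟩ : ∃ t : Fin (n - 2), ((t : ℕ) = (k : ℕ) - 2 ∧ 1 ≤ (t : ℕ)) :=
        ⟨⟨(k : ℕ) - 2, by omega⟩, rfl, by simp only [Fin.val_mk]; omega⟩
      have ek := bwd_val3 hn σ k tk (by omega) htk1
      omega
    · obtain ⟨tj, htj, htj1⟩ : ∃ t : Fin (n - 2), ((t : ℕ) = (j : ℕ) - 2 ∧ 1 ≤ (t : ℕ)) :=
        ⟨⟨(j : ℕ) - 2, by omega⟩, rfl, by simp only [Fin.val_mk]; omega⟩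
      have ej := bwd_val3 hn σ j tj (by omega) htj1
      omega
  · -- i = 2
    exfalso
    have ei := bwd_val2 hn σ i hi
    omega
  · -- i ≥ 3
    obtain ⟨ti, hti, hti1⟩ : ∃ t : Fin (n - 2), ((t : ℕ) = (i : ℕ) - 2 ∧ 1 ≤ (t : ℕ)) :=
      ⟨⟨(i : ℕ) - 2, by omega⟩, rfl, by simp only [Fin.val_mk]; omega⟩
    obtain ⟨tj, htj, htj1⟩ : ∃ t : Fin (n - 2), ((t : ℕ) = (j : ℕ) - 2 ∧ 1 ≤ (t : ℕ)) :=
      ⟨⟨(j : ℕ) - 2, by omega⟩, rfl, by simp only [Fin.val_mk]; omega⟩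
    obtain ⟨tk, htk, htk1⟩ : ∃ t : Fin (n - 2), ((t : ℕ) = (k : ℕ) - 2 ∧ 1 ≤ (t : ℕ)) :=
      ⟨⟨(k : ℕ) - 2, by omega⟩, rfl, by simp only [Fin.val_mk]; omega⟩
    have ei := bwd_val3 hn σ i ti (by omega) hti1
    have ej := bwd_val3 hn σ j tj (by omega) htj1
    have ek := bwd_val3 hn σ k tk (by omega) htk1
    have key := hA ti tj tk (Fin.lt_def.mpr (by omega)) (Fin.lt_def.mpr (by omega))
      (Fin.lt_def.mpr (by omega)) (Fin.lt_def.mpr (by omega))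
    omega

lemma rt1 (hn : 3 ≤ n) (π : Equiv.Perm (Fin n))
    (h1 : (π ⟨1, by omega⟩ : ℕ) = 1) (h2 : (π ⟨2, by omega⟩ : ℕ) = 0) :
    bwdPerm hn (fwdPerm hn π h1 h2) = π := by
  apply Equiv.ext
  intro x
  apply Fin.ext
  rw [bwdPerm_apply]
  have hxn := x.isLt
  rcases (show (x : ℕ) = 0 ∨ (x : ℕ) = 1 ∨ (x : ℕ) = 2 ∨ 3 ≤ (x : ℕ) by omega)
    with hx | hx | hx | hx
  · obtain ⟨t0, ht0⟩ : ∃ t : Fin (n - 2), (t : ℕ) = 0 := ⟨⟨0, by omega⟩, rfl⟩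
    rw [bwd_val0 hn _ x t0 hx ht0, fwdPerm_val]
    have ep : posUp hn t0 = x :=
      Fin.ext (by rw [posUp_val]; simp only [ht0, if_pos]; omega)
    rw [ep]
    have := ge2 hn π h1 h2 x (by omega) (by omega)
    omega
  · rw [bwd_val1 hn _ x hx]
    have : x = ⟨1, by omega⟩ := Fin.ext hx
    rw [this, h1]
  · rw [bwd_val2 hn _ x hx]
    have : x = ⟨2, by omega⟩ := Fin.ext hx
    rw [this, h2]
  · obtain ⟨t, ht, ht1⟩ : ∃ t : Fin (n - 2), ((t : ℕ) = (x : ℕ) - 2 ∧ 1 ≤ (t : ℕ)) :=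
      ⟨⟨(x : ℕ) - 2, by omega⟩, rfl, by simp only [Fin.val_mk]; omega⟩
    rw [bwd_val3 hn _ x t (by omega) ht1, fwdPerm_val]
    have ep : posUp hn t = x := Fin.ext (by rw [posUp_val, if_neg (by omega)]; omega)
    rw [ep]
    have := ge2 hn π h1 h2 x (by omega) (by omega)
    omega

lemma rt2 (hn : 3 ≤ n) (σ : Equiv.Perm (Fin (n - 2)))
    (h1 : ((bwdPerm hn σ) ⟨1, by omega⟩ : ℕ) = 1)
    (h2 : ((bwdPerm hn σ) ⟨2, by omega⟩ : ℕ) = 0) :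
    fwdPerm hn (bwdPerm hn σ) h1 h2 = σ := by
  apply Equiv.ext
  intro y
  apply Fin.ext
  rw [fwdPerm_val, bwdPerm_apply]
  have hyn := y.isLt
  rcases (show (y : ℕ) = 0 ∨ 1 ≤ (y : ℕ) by omega) with hy | hy
  · rw [bwd_val0 hn σ (posUp hn y) y (by rw [posUp_val, if_pos hy]) hy]
    omega
  · rw [bwd_val3 hn σ (posUp hn y) y (by rw [posUp_val, if_neg (by omega)]) hy]
    omega

lemma fwd_spec (hn : 3 ≤ n) (π : Equiv.Perm (Fin n))
    (h1 : (π ⟨1, by omega⟩ : ℕ) = 1) (h2 : (π ⟨2, by omega⟩ : ℕ) = 0) :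
    ((fwdPerm hn π h1 h2) ⟨0, lt0' hn⟩ : ℕ) = (π ⟨0, lt0 hn⟩ : ℕ) - 2 ∧
    ∀ i : Fin (n - 2), 1 ≤ (i : ℕ) →
      ((fwdPerm hn π h1 h2) i : ℕ) =
        (π ⟨(i : ℕ) + 2, lt2 hn i⟩ : ℕ) - 2 := by
  constructor
  · rw [fwdPerm_val]
    have ep : posUp hn ⟨0, by omega⟩ = ⟨0, by omega⟩ :=
      Fin.ext (by rw [posUp_val]; simp)
    rw [ep]
  · intro i hi
    rw [fwdPerm_val]
    have ep : posUp hn i = ⟨(i : ℕ) + 2, by have := i.isLt; omega⟩ :=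
      Fin.ext (by rw [posUp_val, if_neg (by omega)])
    rw [ep]

end BD

/-- For `n ≥ 3`, deleting the second and third entries (necessarily 2 and 1) and
subtracting 2 from all remaining entries is a bijection from permutations of `{1,…,n}`
avoiding a nonconsecutive 321 pattern and starting with three decreasing entries onto
permutations of `{1,…,n-2}` avoiding a nonconsecutive 321 pattern and not starting with
three decreasing entries. -/
theorem bijection_B_to_D (n : ℕ) (hn : 3 ≤ n) :
    ∃ e : {π : Equiv.Perm (Fin n) // AvoidsNonconsec321 π ∧ Dec3 π} ≃
          {σ : Equiv.Perm (Fin (n - 2)) // AvoidsNonconsec321 σ ∧ ¬ Dec3 σ},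
      ∀ π : {π : Equiv.Perm (Fin n) // AvoidsNonconsec321 π ∧ Dec3 π},
        ((e π).val ⟨0, by omega⟩ : ℕ) = (π.val ⟨0, by omega⟩ : ℕ) - 2 ∧
        ∀ i : Fin (n - 2), 1 ≤ (i : ℕ) →
          ((e π).val i : ℕ) =
            (π.val ⟨(i : ℕ) + 2, by have := i.isLt; omega⟩ : ℕ) - 2 := by
  refine ⟨{
      toFun := fun p =>
        ⟨BD.fwdPerm hn p.1 (BD.struct hn p.1 p.2.1 p.2.2).1 (BD.struct hn p.1 p.2.1 p.2.2).2,
          BD.fwd_avoids hn p.1 p.2.1 _ _⟩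
      invFun := fun s =>
        ⟨BD.bwdPerm hn s.1, BD.bwd_avoids hn s.1 s.2.1 s.2.2, BD.bwd_dec3 hn s.1⟩
      left_inv := fun p => Subtype.ext (BD.rt1 hn p.1 (BD.struct hn p.1 p.2.1 p.2.2).1 (BD.struct hn p.1 p.2.1 p.2.2).2)
      right_inv := fun s => Subtype.ext (BD.rt2 hn s.1 (BD.bwd_h1 hn s.1) (BD.bwd_h2 hn s.1)) }, ?_⟩
  intro p
  exact BD.fwd_spec hn p.1 (BD.struct hn p.1 p.2.1 p.2.2).1 (BD.struct hn p.1 p.2.1 p.2.2).2
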